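/- arXiv:1903.04286 — 2 statements merged into one kernel-verified Lean document; each statement's English description precedes it below -/
import Mathlib

section
/- If G is a finite connected graph with diameter at most 2, then every independent set of G is a general position set; consequently gp(G) ≥ α(G), where α(G) is the independence number of G. -/
namespace SimpleGraph

variable {V : Type*}

/-- `S` is a general position set of `G`: no vertex of `S` lies on a geodesic
(shortest path) between two other vertices of `S`. -/
def IsGPSet (G : SimpleGraph V) (S : Set V) : Prop :=
  ∀ ⦃u v w : V⦄, u ∈ S → v ∈ S → w ∈ S → u ≠ v → u ≠ w → v ≠ w →
    ∀ p : G.Walk u v, p.IsPath → p.length = G.dist u v → w ∉ p.support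

/-- The general position number of `G`: the maximum cardinality of a general
position set of `G`. -/
noncomputable def gpNumber (G : SimpleGraph V) : ℕ :=
  sSup {n | ∃ S : Set V, G.IsGPSet S ∧ n = S.ncard}

/-- `ρ(G)`: the maximum number of vertices in a union of pairwise independent
complete subgraphs of `G`, where complete subgraphs `Q`, `Q'` are independent
if `d_G(u,u') ≥ 2` for every `u ∈ Q` and `u' ∈ Q'`. -/
noncomputable def rho (G : SimpleGraph V) : ℕ :=
  sSup {n | ∃ 𝒬 : Finset (Finset V),
    (∀ Q ∈ 𝒬, G.IsClique (Q : Set V)) ∧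
    (∀ Q ∈ 𝒬, ∀ Q' ∈ 𝒬, Q ≠ Q' → ∀ u ∈ Q, ∀ u' ∈ Q', 2 ≤ G.edist u u') ∧
    n = (⋃ Q ∈ 𝒬, (Q : Set V)).ncard}

/-- A graph is complete multipartite iff non-adjacency is transitive. -/
def IsCompleteMultipartite₀ (G : SimpleGraph V) : Prop := Transitive (¬G.Adj · ·)

/-- `η(G)`: the maximum order of an induced complete multipartite subgraph of
the complement of `G`. -/
noncomputable def eta (G : SimpleGraph V) : ℕ :=
  sSup {n | ∃ B : Set V, (Gᶜ.induce B).IsCompleteMultipartite₀ ∧ n = B.ncard}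

/-- An independent set of a graph. -/
def IsIndepSet₀ (G : SimpleGraph V) (S : Set V) : Prop :=
  S.Pairwise fun u v => ¬ G.Adj u v

/-- The independence number `α(G)`. -/
noncomputable def indepNum₀ (G : SimpleGraph V) : ℕ :=
  sSup {n | ∃ S : Set V, G.IsIndepSet₀ S ∧ n = S.ncard}

end SimpleGraph

/-- The Kneser graph `K(n,k)`: vertices are the `k`-element subsets of an
`n`-element set, two vertices adjacent iff the corresponding sets are disjoint. -/
def kneserGraph (n k : ℕ) : SimpleGraph {s : Finset (Fin n) // s.card = k} where
  Adj a b := Disjoint a.1 b.1 ∧ a ≠ b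
  symm := by
    refine ⟨?_⟩
    rintro a b ⟨h1, h2⟩
    exact ⟨h1.symm, h2.symm⟩
  loopless := by
    refine ⟨?_⟩
    rintro a ⟨-, h⟩
    exact h rfl

/-- If `G` is a finite connected graph of diameter at most `2`, then every
independent set of `G` is a general position set, and consequently
`gp(G) ≥ α(G)`. -/
theorem isGPSet_of_isIndepSet_of_diam_le_two {V : Type*} [Fintype V]
    (G : SimpleGraph V) (hconn : G.Connected) (hdiam : G.ediam ≤ 2) :
    (∀ S : Set V, G.IsIndepSet₀ S → G.IsGPSet S) ∧ G.indepNum₀ ≤ G.gpNumber := by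
  have key : ∀ S : Set V, G.IsIndepSet₀ S → G.IsGPSet S := by
    intro S hS u v w hu hv hw huv huw hvw p hp hlen hmem
    classical
    have hdle : G.dist u v ≤ 2 := by
      have h1 : G.edist u v ≤ 2 := le_trans G.edist_le_ediam hdiam
      have := ENat.toNat_le_toNat h1 (by decide)
      simpa [SimpleGraph.dist] using this
    have hpos : 0 < G.dist u v :=
      ((hconn u v).pos_dist_of_ne huv)
    have hne1 : G.dist u v ≠ 1 := by
      intro h
      exact hS hu hv huv (SimpleGraph.dist_eq_one_iff_adj.mp h)
    have hd2 : G.dist u v = 2 := by omega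
    -- split p at w
    have hspec := p.take_spec hmem
    have hlensum : (p.takeUntil w hmem).length + (p.dropUntil w hmem).length = 2 := by
      have := congrArg SimpleGraph.Walk.length hspec
      rw [SimpleGraph.Walk.length_append] at this
      omega
    have h1 : 1 ≤ (p.takeUntil w hmem).length := by
      by_contra h
      have : (p.takeUntil w hmem).length = 0 := by omega
      exact huw ((p.takeUntil w hmem).eq_of_length_eq_zero this)
    have h2 : 1 ≤ (p.dropUntil w hmem).length := by
      by_contra h
      have : (p.dropUntil w hmem).length = 0 := by omega
      exact hvw ((p.dropUntil w hmem).eq_of_length_eq_zero this).symm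
    have ht1 : (p.takeUntil w hmem).length = 1 := by omega
    exact hS hu hw huw ((p.takeUntil w hmem).adj_of_length_eq_one ht1)
  refine ⟨key, ?_⟩
  apply csSup_le_csSup
  · refine ⟨Fintype.card V, ?_⟩
    rintro n ⟨S, -, rfl⟩
    calc S.ncard ≤ (Set.univ : Set V).ncard :=
          Set.ncard_le_ncard (Set.subset_univ S) Set.finite_univ
      _ = Fintype.card V := by simp [Set.ncard_univ]
  · exact ⟨0, ∅, by simp [SimpleGraph.IsIndepSet₀]⟩
  · rintro n ⟨S, hS, rfl⟩
    exact ⟨S, key S hS, rfl⟩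
end

section
/- For every integer n ≥ 3, the general position number of the line graph of the complete graph K_n equals n if 3 divides n, and equals n − 1 if 3 does not divide n. -/
open SimpleGraph

namespace GPX

variable {n : ℕ}

/-- Two Sym2's share an element. -/
def Meets (e f : Sym2 (Fin n)) : Prop := ∃ x, x ∈ e ∧ x ∈ f

lemma sym2_exists_mk {α : Type*} (z : Sym2 α) : ∃ a b, z = s(a, b) := by
  induction z using Sym2.ind with | _ a b => exact ⟨a, b, rfl⟩

lemma lg_adj {e f : (⊤ : SimpleGraph (Fin n)).edgeSet} :
    (⊤ : SimpleGraph (Fin n)).lineGraph.Adj e f ↔ e ≠ f ∧ Meets e.1 f.1 := by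
  rw [lineGraph_adj_iff_exists]; rfl

lemma dist2 {e f : (⊤ : SimpleGraph (Fin n)).edgeSet} (hne : e ≠ f)
    (hm : ¬ Meets e.1 f.1) : (⊤ : SimpleGraph (Fin n)).lineGraph.dist e f = 2 := by
  obtain ⟨a, b, hab⟩ := sym2_exists_mk e.1
  obtain ⟨c, d, hcd⟩ := sym2_exists_mk f.1
  have hac : a ≠ c := by
    intro h; exact hm ⟨a, by rw [hab]; simp, by rw [hcd, ← h]; simp⟩
  have hmE : s(a, c) ∈ (⊤ : SimpleGraph (Fin n)).edgeSet := by simpa using hac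
  set m : (⊤ : SimpleGraph (Fin n)).edgeSet := ⟨s(a, c), hmE⟩ with hmdef
  have ha : a ∈ e.1 := by rw [hab]; simp
  have hc : c ∈ f.1 := by rw [hcd]; simp
  have h1 : (⊤ : SimpleGraph (Fin n)).lineGraph.Adj e m := by
    rw [lg_adj]
    refine ⟨?_, a, ha, by simp [hmdef]⟩
    intro h
    exact hm ⟨c, by rw [h]; simp [hmdef], hc⟩
  have h2 : (⊤ : SimpleGraph (Fin n)).lineGraph.Adj m f := by
    rw [lg_adj]
    refine ⟨?_, c, by simp [hmdef], hc⟩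
    intro h
    exact hm ⟨a, ha, by rw [← h]; simp [hmdef]⟩
  have hle : (⊤ : SimpleGraph (Fin n)).lineGraph.dist e f ≤ 2 := by
    simpa using SimpleGraph.dist_le (SimpleGraph.Walk.cons h1 (SimpleGraph.Walk.cons h2 SimpleGraph.Walk.nil))
  have h0 : (⊤ : SimpleGraph (Fin n)).lineGraph.dist e f ≠ 0 := by
    intro h
    rcases SimpleGraph.dist_eq_zero_iff_eq_or_not_reachable.mp h with h' | h'
    · exact hne h'
    · exact h' ⟨SimpleGraph.Walk.cons h1 (SimpleGraph.Walk.cons h2 SimpleGraph.Walk.nil)⟩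
  have h1' : (⊤ : SimpleGraph (Fin n)).lineGraph.dist e f ≠ 1 := by
    intro h
    obtain ⟨-, x, hx1, hx2⟩ := lg_adj.mp (SimpleGraph.dist_eq_one_iff_adj.mp h)
    exact hm ⟨x, hx1, hx2⟩
  omega

lemma gp_trans {S : Set ((⊤ : SimpleGraph (Fin n)).edgeSet)}
    (hS : (⊤ : SimpleGraph (Fin n)).lineGraph.IsGPSet S)
    {e f g : (⊤ : SimpleGraph (Fin n)).edgeSet} (he : e ∈ S) (hf : f ∈ S) (hg : g ∈ S)
    (hef : e ≠ f) (hfg : f ≠ g) (heg : e ≠ g)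
    (h1 : Meets e.1 f.1) (h2 : Meets f.1 g.1) : Meets e.1 g.1 := by
  by_contra hm
  have hd := dist2 heg hm
  have a1 : (⊤ : SimpleGraph (Fin n)).lineGraph.Adj e f := lg_adj.mpr ⟨hef, h1⟩
  have a2 : (⊤ : SimpleGraph (Fin n)).lineGraph.Adj f g := lg_adj.mpr ⟨hfg, h2⟩
  set p : (⊤ : SimpleGraph (Fin n)).lineGraph.Walk e g :=
    SimpleGraph.Walk.cons a1 (SimpleGraph.Walk.cons a2 SimpleGraph.Walk.nil) with hp
  have hpath : p.IsPath := by
    rw [SimpleGraph.Walk.isPath_def]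
    simp [hp, hef, hfg, heg]
  have hlen : p.length = (⊤ : SimpleGraph (Fin n)).lineGraph.dist e g := by simp [hp, hd]
  have := hS he hg hf heg hef (Ne.symm hfg) p hpath hlen
  simp [hp] at this

end GPX
namespace GPX

variable {n : ℕ}

/-- `c` is an endpoint of `e` through which no other edge of `T` passes. -/
def IsLeafAt (T : Set (Sym2 (Fin n))) (e : Sym2 (Fin n)) (c : Fin n) : Prop :=
  c ∈ e ∧ ∀ f ∈ T, c ∈ f → f = e

/-- `c` is a triangle apex for `e` in `T`. -/
def IsApex (T : Set (Sym2 (Fin n))) (e : Sym2 (Fin n)) (c : Fin n) : Prop :=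
  c ∉ e ∧ ∀ x ∈ e, s(x, c) ∈ T

/-- Hypotheses on `T`: all non-diagonal, and "meets" is transitive. -/
def Good (T : Set (Sym2 (Fin n))) : Prop :=
  (∀ e ∈ T, ¬ e.IsDiag) ∧
  (∀ e ∈ T, ∀ f ∈ T, ∀ g ∈ T, e ≠ f → f ≠ g → e ≠ g →
    Meets e f → Meets f g → Meets e g)

lemma leaf_or_apex {T : Set (Sym2 (Fin n))} (hT : Good T) {e : Sym2 (Fin n)} (he : e ∈ T) :
    (∃ c, IsLeafAt T e c) ∨ (∃ c, IsApex T e c) := by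
  obtain ⟨a, b, hab⟩ := sym2_exists_mk e
  have hne : a ≠ b := by
    have := hT.1 e he; rw [hab, Sym2.mk_isDiag_iff] at this; exact this
  by_cases hA : ∃ c, IsLeafAt T e c
  · exact Or.inl hA
  push_neg at hA
  -- get an edge f ≠ e through a
  have hfa : ∃ f ∈ T, a ∈ f ∧ f ≠ e := by
    have := hA a
    rw [IsLeafAt] at this
    push_neg at this
    obtain ⟨f, hf, haf, hfe⟩ := this (by rw [hab]; simp)
    exact ⟨f, hf, haf, hfe⟩
  have hgb : ∃ g ∈ T, b ∈ g ∧ g ≠ e := by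
    have := hA b
    rw [IsLeafAt] at this
    push_neg at this
    obtain ⟨g, hg, hbg, hge⟩ := this (by rw [hab]; simp)
    exact ⟨g, hg, hbg, hge⟩
  obtain ⟨f, hfT, haf, hfe⟩ := hfa
  obtain ⟨g, hgT, hbg, hge⟩ := hgb
  -- write f = s(a, c)
  obtain ⟨c, hc⟩ := Sym2.mem_iff_exists.mp haf
  obtain ⟨d, hd⟩ := Sym2.mem_iff_exists.mp hbg
  have hca : c ≠ a := by
    intro h; apply hT.1 f hfT; rw [hc, h, Sym2.mk_isDiag_iff]
  have hcb : c ≠ b := by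
    intro h; apply hfe; rw [hc, hab, h]
  have hdb : d ≠ b := by
    intro h; apply hT.1 g hgT; rw [hd, h, Sym2.mk_isDiag_iff]
  have hda : d ≠ a := by
    intro h; apply hge; rw [hd, hab, h, Sym2.eq_swap]
  have hfg : f ≠ g := by
    intro h
    rw [hc, hd, Sym2.eq_iff] at h
    rcases h with ⟨h1, h2⟩ | ⟨h1, h2⟩
    · exact hne h1
    · exact hda h1.symm
  have hmfg : Meets f g := by
    refine hT.2 f hfT e he g hgT hfe (Ne.symm hge) hfg ?_ ?_
    · exact ⟨a, haf, by rw [hab]; simp⟩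
    · exact ⟨b, by rw [hab]; simp, hbg⟩
  obtain ⟨x, hxf, hxg⟩ := hmfg
  rw [hc, Sym2.mem_iff] at hxf
  rw [hd, Sym2.mem_iff] at hxg
  have hcd : c = d := by
    rcases hxf with h1 | h1 <;> rcases hxg with h2 | h2
    · exact (hne (h1.symm.trans h2)).elim
    · exact (hda (h2.symm.trans h1)).elim
    · exact (hcb (h1.symm.trans h2)).elim
    · exact h1.symm.trans h2
  refine Or.inr ⟨c, ?_, ?_⟩
  · rw [hab, Sym2.mem_iff]; push_neg; exact ⟨hca, hcb⟩
  · intro x hx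
    rw [hab, Sym2.mem_iff] at hx
    rcases hx with rfl | rfl
    · rwa [← hc]
    · rw [← hcd] at hd; rwa [← hd]

lemma apex_unique {T : Set (Sym2 (Fin n))} (hT : Good T) {e : Sym2 (Fin n)} (he : e ∈ T)
    {c c' : Fin n} (h1 : IsApex T e c) (h2 : IsApex T e c') : c = c' := by
  by_contra hcc
  obtain ⟨a, b, hab⟩ := sym2_exists_mk e
  have hne : a ≠ b := by
    have := hT.1 e he; rw [hab, Sym2.mk_isDiag_iff] at this; exact this
  have hca : c ≠ a := fun h => h1.1 (by rw [hab, Sym2.mem_iff]; exact Or.inl h)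
  have hcb : c ≠ b := fun h => h1.1 (by rw [hab, Sym2.mem_iff]; exact Or.inr h)
  have hc'a : c' ≠ a := fun h => h2.1 (by rw [hab, Sym2.mem_iff]; exact Or.inl h)
  have hc'b : c' ≠ b := fun h => h2.1 (by rw [hab, Sym2.mem_iff]; exact Or.inr h)
  have hf : s(a, c) ∈ T := h1.2 a (by rw [hab]; simp)
  have hg : s(b, c') ∈ T := h2.2 b (by rw [hab]; simp)
  have hfe : s(a, c) ≠ e := by
    rw [hab, Ne, Sym2.eq_iff]; push_neg
    exact ⟨fun _ => hcb, fun _ => hca⟩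
  have hge : s(b, c') ≠ e := by
    rw [hab, Ne, Sym2.eq_iff]; push_neg
    exact ⟨fun h => (hne h.symm).elim, fun _ => hc'a⟩
  have hfg : s(a, c) ≠ s(b, c') := by
    rw [Ne, Sym2.eq_iff]; push_neg
    exact ⟨fun _ => hcc, fun _ => hcb⟩
  have : Meets s(a, c) s(b, c') := by
    refine hT.2 _ hf e he _ hg hfe (Ne.symm hge) hfg ?_ ?_
    · exact ⟨a, by simp, by rw [hab]; simp⟩
    · exact ⟨b, by rw [hab]; simp, by simp⟩
  obtain ⟨x, hx1, hx2⟩ := this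
  rw [Sym2.mem_iff] at hx1 hx2
  rcases hx1 with h1 | h1 <;> rcases hx2 with h2 | h2
  · exact hne (h1.symm.trans h2)
  · exact hc'a (h2.symm.trans h1)
  · exact hcb (h1.symm.trans h2)
  · exact hcc (h1.symm.trans h2)

/-- Edges of `T` through the apex `c` of `e` must meet `e`. -/
lemma apex_absorb {T : Set (Sym2 (Fin n))} (hT : Good T) {e : Sym2 (Fin n)} (he : e ∈ T)
    {c : Fin n} (hc : IsApex T e c) {f : Sym2 (Fin n)} (hf : f ∈ T) (hcf : c ∈ f) :
    Meets e f := by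
  obtain ⟨a, b, hab⟩ := sym2_exists_mk e
  have hg : s(a, c) ∈ T := hc.2 a (by rw [hab]; simp)
  by_cases hfg : f = s(a, c)
  · exact ⟨a, by rw [hab]; simp, by rw [hfg]; simp⟩
  have hca : c ≠ a := fun h => hc.1 (by rw [hab, Sym2.mem_iff]; exact Or.inl h)
  have hge : s(a, c) ≠ e := by
    intro h; exact hc.1 (h ▸ (by simp : c ∈ s(a, c)))
  have hef : e ≠ f := by
    intro h; exact hc.1 (h ▸ hcf)
  refine hT.2 e he _ hg f hf (Ne.symm hge) (fun h => hfg h.symm) hef ?_ ?_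
  · exact ⟨a, by rw [hab]; simp, by simp⟩
  · exact ⟨c, by simp, hcf⟩

end GPX
namespace GPX

variable {n : ℕ}

lemma nondiag_of {T : Set (Sym2 (Fin n))} (hT : Good T) {e : Sym2 (Fin n)} (he : e ∈ T)
    {a b : Fin n} (hab : e = s(a, b)) : a ≠ b := by
  have := hT.1 e he; rw [hab, Sym2.mk_isDiag_iff] at this; exact this

open scoped Classical in
/-- The injection from edges to vertices. -/
noncomputable def phi (T : Set (Sym2 (Fin n))) (e : Sym2 (Fin n)) : Fin n :=
  if h : ∃ c, IsLeafAt T e c then h.choose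
  else if h' : ∃ c, IsApex T e c then h'.choose
  else (sym2_exists_mk e).choose

lemma phi_cases {T : Set (Sym2 (Fin n))} (hT : Good T) {e : Sym2 (Fin n)} (he : e ∈ T) :
    IsLeafAt T e (phi T e) ∨ ((¬ ∃ c, IsLeafAt T e c) ∧ IsApex T e (phi T e)) := by
  rw [phi]
  split_ifs with h h'
  · exact Or.inl h.choose_spec
  · exact Or.inr ⟨h, h'.choose_spec⟩
  · exact absurd (leaf_or_apex hT he) (by simp [h, h'])

lemma leaf_apex_contra {T : Set (Sym2 (Fin n))} (hT : Good T) {e e' : Sym2 (Fin n)}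
    (he : e ∈ T) (he' : e' ∈ T) {c : Fin n}
    (hl : IsLeafAt T e c) (ha : IsApex T e' c) : False := by
  obtain ⟨a', b', h'ab⟩ := sym2_exists_mk e'
  have hne' : a' ≠ b' := nondiag_of hT he' h'ab
  have h1 : s(a', c) ∈ T := ha.2 a' (by rw [h'ab]; simp)
  have h2 : s(b', c) ∈ T := ha.2 b' (by rw [h'ab]; simp)
  have e1 : s(a', c) = e := hl.2 _ h1 (by simp)
  have e2 : s(b', c) = e := hl.2 _ h2 (by simp)
  have : s(a', c) = s(b', c) := e1.trans e2.symm
  rw [Sym2.eq_iff] at this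
  rcases this with ⟨h, -⟩ | ⟨h, h''⟩
  · exact hne' h
  · exact ha.1 (by rw [h'ab, Sym2.mem_iff]; exact Or.inl h.symm)

lemma phi_inj {T : Set (Sym2 (Fin n))} (hT : Good T) : Set.InjOn (phi T) T := by
  intro e he e' he' hphi
  rcases phi_cases hT he with hl | ⟨-, ha⟩ <;> rcases phi_cases hT he' with hl' | ⟨-, ha'⟩
  · exact (hl.2 e' he' (hphi ▸ hl'.1)).symm
  · exact (leaf_apex_contra hT he he' hl (hphi ▸ ha')).elim
  · exact (leaf_apex_contra hT he' he hl' (hphi ▸ ha)).elim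
  · -- both apex
    rw [← hphi] at ha'
    set c := phi T e with hc
    obtain ⟨a, b, hab⟩ := sym2_exists_mk e
    obtain ⟨a', b', h'ab⟩ := sym2_exists_mk e'
    have hnab : a ≠ b := nondiag_of hT he hab
    have hna'b' : a' ≠ b' := nondiag_of hT he' h'ab
    have key : ∀ x : Fin n, x ∈ e' → x ∈ e := by
      intro x hx
      have hgT : s(x, c) ∈ T := ha'.2 x hx
      have hm : Meets e s(x, c) := apex_absorb hT he ha hgT (by simp)
      obtain ⟨y, hy1, hy2⟩ := hm
      rw [Sym2.mem_iff] at hy2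
      rcases hy2 with rfl | rfl
      · exact hy1
      · exact absurd hy1 ha.1
    have ha'e : a' ∈ e := key a' (by rw [h'ab]; simp)
    have hb'e : b' ∈ e := key b' (by rw [h'ab]; simp)
    rw [hab, Sym2.mem_iff] at ha'e hb'e
    rw [hab, h'ab]
    rcases ha'e with h1 | h1 <;> rcases hb'e with h2 | h2
    · exact absurd (h1.trans h2.symm) hna'b'
    · rw [h1, h2]
    · rw [h1, h2, Sym2.eq_swap]
    · exact absurd (h1.trans h2.symm) hna'b'

lemma missing_vertex {T : Set (Sym2 (Fin n))} (hT : Good T)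
    (hleaf : ∃ e ∈ T, ∃ c, IsLeafAt T e c) : ∃ w, ∀ e' ∈ T, phi T e' ≠ w := by
  obtain ⟨e, he, c0, hc0⟩ := hleaf
  obtain ⟨a, hae⟩ := Sym2.mem_iff_exists.mp hc0.1
  have hne : c0 ≠ a := nondiag_of hT he hae
  by_cases hA : ∀ f ∈ T, a ∈ f → f = e
  · -- both endpoints leaves
    have hla : IsLeafAt T e a := ⟨by rw [hae]; simp, hA⟩
    have hl : IsLeafAt T e (phi T e) := by
      rcases phi_cases hT he with h | ⟨hno, -⟩
      · exact h
      · exact (hno ⟨c0, hc0⟩).elim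
    set u := phi T e with hudef
    have hu : u ∈ e := hl.1
    have hw : ∃ w, IsLeafAt T e w ∧ w ≠ u := by
      rw [hae, Sym2.mem_iff] at hu
      rcases hu with h | h
      · exact ⟨a, hla, by rw [h]; exact hne.symm⟩
      · exact ⟨c0, hc0, by rw [h]; exact hne⟩
    obtain ⟨w, hlw, hwu⟩ := hw
    refine ⟨w, fun e' he' hphi => ?_⟩
    rcases phi_cases hT he' with hl' | ⟨-, ha'⟩
    · have heq : e' = e := hlw.2 e' he' (hphi ▸ hl'.1)
      exact hwu (by rw [← hphi, heq])
    · exact leaf_apex_contra hT he he' hlw (hphi ▸ ha')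
  · push_neg at hA
    obtain ⟨f, hf, haf, hfe⟩ := hA
    refine ⟨a, fun e' he' hphi => ?_⟩
    rcases phi_cases hT he' with hl' | ⟨-, ha'⟩
    · rw [hphi] at hl'
      have h1 := hl'.2 e he (by rw [hae]; simp)
      have h2 := hl'.2 f hf haf
      exact hfe (h2.trans h1.symm)
    · rw [hphi] at ha'
      obtain ⟨a', b', h'ab⟩ := sym2_exists_mk e'
      have hna'b' : a' ≠ b' := nondiag_of hT he' h'ab
      have hana' : a ≠ a' := fun h => ha'.1 (by rw [h'ab, Sym2.mem_iff]; exact Or.inl h)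
      have hanb' : a ≠ b' := fun h => ha'.1 (by rw [h'ab, Sym2.mem_iff]; exact Or.inr h)
      by_cases h1 : a' = c0
      · have heq : e' = e := hc0.2 e' he' (by rw [h'ab, h1]; simp)
        exact ha'.1 (by rw [heq, hae, Sym2.mem_iff]; exact Or.inr rfl)
      by_cases h2 : b' = c0
      · have heq : e' = e := hc0.2 e' he' (by rw [h'ab, h2]; simp)
        exact ha'.1 (by rw [heq, hae, Sym2.mem_iff]; exact Or.inr rfl)
      -- main chain
      have hg : s(a', a) ∈ T := ha'.2 a' (by rw [h'ab]; simp)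
      have hne'g : e' ≠ s(a', a) := fun h => ha'.1 (by rw [h]; simp)
      have hge : s(a', a) ≠ e := by
        rw [hae, Ne, Sym2.eq_iff]; push_neg
        exact ⟨fun h => (h1 h).elim, fun h => (hana' h.symm).elim⟩
      have hne'e : e' ≠ e := fun h => ha'.1 (by rw [h, hae, Sym2.mem_iff]; exact Or.inr rfl)
      have hm : Meets e' e :=
        hT.2 e' he' _ hg e he hne'g hge hne'e
          ⟨a', by rw [h'ab]; simp, by simp⟩ ⟨a, by simp, by rw [hae]; simp⟩
      obtain ⟨x, hx1, hx2⟩ := hm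
      rw [h'ab, Sym2.mem_iff] at hx1
      rw [hae, Sym2.mem_iff] at hx2
      rcases hx1 with h | h <;> rcases hx2 with h' | h'
      · exact h1 (h.symm.trans h')
      · exact hana' (h'.symm.trans h)
      · exact h2 (h.symm.trans h')
      · exact hanb' (h'.symm.trans h)

end GPX
namespace GPX

variable {n : ℕ}

lemma tri_iff {T : Set (Sym2 (Fin n))} (hT : Good T) {e : Sym2 (Fin n)} (he : e ∈ T)
    {a b c : Fin n} (hab : e = s(a, b)) (hc : IsApex T e c) (x : Fin n) :
    (x ∈ e ∨ IsApex T e x) ↔ (x = a ∨ x = b ∨ x = c) := by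
  constructor
  · rintro (hx | hx)
    · rw [hab, Sym2.mem_iff] at hx; tauto
    · exact Or.inr (Or.inr (apex_unique hT he hx hc))
  · rintro (rfl | rfl | rfl)
    · exact Or.inl (by rw [hab]; simp)
    · exact Or.inl (by rw [hab]; simp)
    · exact Or.inr hc

lemma tri_third {T : Set (Sym2 (Fin n))} (hT : Good T) {e : Sym2 (Fin n)} (he : e ∈ T)
    {a b c : Fin n} (hab : e = s(a, b)) (hc : IsApex T e c) :
    s(a, c) ∈ T ∧ IsApex T s(a, c) b := by
  have hnab : a ≠ b := nondiag_of hT he hab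
  have hca : c ≠ a := fun h => hc.1 (by rw [hab, Sym2.mem_iff]; exact Or.inl h)
  have hcb : c ≠ b := fun h => hc.1 (by rw [hab, Sym2.mem_iff]; exact Or.inr h)
  refine ⟨hc.2 a (by rw [hab]; simp), ?_, ?_⟩
  · rw [Sym2.mem_iff]; push_neg; exact ⟨hnab.symm, fun h => hcb h.symm⟩
  · intro x hx
    rw [Sym2.mem_iff] at hx
    rcases hx with rfl | rfl
    · rw [← hab]; exact he
    · rw [Sym2.eq_swap]; exact hc.2 b (by rw [hab]; simp)

lemma dvd3 {T : Set (Sym2 (Fin n))} (hT : Good T)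
    (hnoleaf : ¬ ∃ e ∈ T, ∃ c, IsLeafAt T e c) : 3 ∣ T.ncard := by
  classical
  have hapex : ∀ e ∈ T, ∃ c, IsApex T e c := by
    intro e he
    rcases leaf_or_apex hT he with h | h
    · exact absurd ⟨e, he, h⟩ hnoleaf
    · exact h
  have hfin : T.Finite := T.toFinite
  set F : Finset (Sym2 (Fin n)) := hfin.toFinset with hFdef
  have hmemF : ∀ e, e ∈ F ↔ e ∈ T := fun e => hfin.mem_toFinset
  have hcardF : T.ncard = F.card := by
    rw [← Set.ncard_coe_finset, hfin.coe_toFinset]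
  set tri : Sym2 (Fin n) → Set (Fin n) := fun e => {x | x ∈ e ∨ IsApex T e x} with htridef
  have htrimem : ∀ e x, x ∈ tri e ↔ (x ∈ e ∨ IsApex T e x) := fun e x => Iff.rfl
  have hmain := Finset.card_eq_sum_card_fiberwise
      (f := tri) (s := F) (t := F.image tri) (fun x hx => Finset.mem_image_of_mem tri hx)
  have hfiber : ∀ A ∈ F.image tri, (F.filter (fun e => tri e = A)).card = 3 := by
    intro A hA
    obtain ⟨e0, he0F, he0A⟩ := Finset.mem_image.mp hA
    have he0 : e0 ∈ T := (hmemF e0).mp he0F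
    obtain ⟨a, b, hab⟩ := sym2_exists_mk e0
    have hnab : a ≠ b := nondiag_of hT he0 hab
    obtain ⟨c, hc⟩ := hapex e0 he0
    have hca : c ≠ a := fun h => hc.1 (by rw [hab, Sym2.mem_iff]; exact Or.inl h)
    have hcb : c ≠ b := fun h => hc.1 (by rw [hab, Sym2.mem_iff]; exact Or.inr h)
    have h1 := tri_third hT he0 hab hc
    have h2 := tri_third hT he0 (hab.trans Sym2.eq_swap.symm) hc
    -- h2 : s(b, c) ∈ T ∧ IsApex T s(b, c) a
    have te0 : tri e0 = {a, b, c} := by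
      ext x; rw [htrimem]
      rw [tri_iff hT he0 hab hc x]
      simp [Set.mem_insert_iff]
    have t1 : tri s(a, c) = {a, b, c} := by
      ext x; rw [htrimem]
      rw [tri_iff hT h1.1 rfl h1.2 x]
      simp [Set.mem_insert_iff]; tauto
    have t2 : tri s(b, c) = {a, b, c} := by
      ext x; rw [htrimem]
      rw [tri_iff hT h2.1 rfl h2.2 x]
      simp [Set.mem_insert_iff]; tauto
    have hA3 : A = ({a, b, c} : Set (Fin n)) := he0A.symm.trans te0
    have hfe : F.filter (fun e => tri e = A) = {s(a, b), s(a, c), s(b, c)} := by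
      ext e'
      simp only [Finset.mem_filter, Finset.mem_insert, Finset.mem_singleton, hmemF]
      constructor
      · rintro ⟨he'T, htri⟩
        obtain ⟨x, y, hxy⟩ := sym2_exists_mk e'
        have hnxy : x ≠ y := nondiag_of hT he'T hxy
        have hx : x ∈ ({a, b, c} : Set (Fin n)) := by
          rw [← hA3, ← htri, htrimem]
          exact Or.inl (by rw [hxy]; simp)
        have hy : y ∈ ({a, b, c} : Set (Fin n)) := by
          rw [← hA3, ← htri, htrimem]
          exact Or.inl (by rw [hxy]; simp)
        simp only [Set.mem_insert_iff, Set.mem_singleton_iff] at hx hy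
        rw [hxy]
        rcases hx with rfl | rfl | rfl <;> rcases hy with rfl | rfl | rfl
        · exact absurd rfl hnxy
        · exact Or.inl rfl
        · exact Or.inr (Or.inl rfl)
        · exact Or.inl Sym2.eq_swap
        · exact absurd rfl hnxy
        · exact Or.inr (Or.inr rfl)
        · exact Or.inr (Or.inl Sym2.eq_swap)
        · exact Or.inr (Or.inr Sym2.eq_swap)
        · exact absurd rfl hnxy
      · rintro (rfl | rfl | rfl)
        · exact ⟨hab ▸ he0, by rw [← hab, he0A]⟩
        · exact ⟨h1.1, t1.trans hA3.symm⟩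
        · exact ⟨h2.1, t2.trans hA3.symm⟩
    have d12 : s(a, b) ≠ s(a, c) := by
      rw [Ne, Sym2.eq_iff]; push_neg
      exact ⟨fun _ => fun h => hcb h.symm, fun _ => hnab.symm⟩
    have d13 : s(a, b) ≠ s(b, c) := by
      rw [Ne, Sym2.eq_iff]; push_neg
      exact ⟨fun h => (hnab h).elim, fun h => (hca h.symm).elim⟩
    have d23 : s(a, c) ≠ s(b, c) := by
      rw [Ne, Sym2.eq_iff]; push_neg
      exact ⟨fun h => (hnab h).elim, fun _ => hcb⟩
    rw [hfe]
    rw [Finset.card_insert_of_notMem (by simp [d12, d13]),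
      Finset.card_insert_of_notMem (by simp [d23]), Finset.card_singleton]
  rw [hcardF, hmain, Finset.sum_congr rfl hfiber, Finset.sum_const, smul_eq_mul]
  exact dvd_mul_left 3 _

end GPX
namespace GPX

variable {n : ℕ}

lemma good_card_le {T : Set (Sym2 (Fin n))} (hT : Good T) :
    T.ncard ≤ n ∧ (¬ 3 ∣ n → T.ncard ≤ n - 1) := by
  have hinj : Set.InjOn (phi T) T := phi_inj hT
  have himg : T.ncard = (phi T '' T).ncard := (Set.ncard_image_of_injOn hinj).symm
  have h1 : T.ncard ≤ n := by
    rw [himg]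
    calc (phi T '' T).ncard ≤ (Set.univ : Set (Fin n)).ncard :=
          Set.ncard_le_ncard (Set.subset_univ _) Set.finite_univ
    _ = n := by rw [Set.ncard_univ]; simp
  refine ⟨h1, fun h3 => ?_⟩
  by_cases hleaf : ∃ e ∈ T, ∃ c, IsLeafAt T e c
  · obtain ⟨w, hw⟩ := missing_vertex hT hleaf
    have hsub : phi T '' T ⊆ {w}ᶜ := by
      rintro x ⟨e, he, rfl⟩; exact hw e he
    have hcompl : ({w}ᶜ : Set (Fin n)).ncard = n - 1 := by
      rw [Set.compl_eq_univ_diff, Set.ncard_diff (Set.subset_univ _)]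
      rw [Set.ncard_univ, Set.ncard_singleton]; simp
    rw [himg]
    calc (phi T '' T).ncard ≤ ({w}ᶜ : Set (Fin n)).ncard :=
          Set.ncard_le_ncard hsub (Set.toFinite _)
    _ = n - 1 := hcompl
  · have := dvd3 hT hleaf
    omega

/-- Any GP set of the line graph of `K_n` gives a Good edge set of the same size. -/
lemma gp_to_good {S : Set ((⊤ : SimpleGraph (Fin n)).edgeSet)}
    (hS : (⊤ : SimpleGraph (Fin n)).lineGraph.IsGPSet S) :
    Good (Subtype.val '' S) ∧ (Subtype.val '' S).ncard = S.ncard := by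
  refine ⟨⟨?_, ?_⟩, Set.ncard_image_of_injective S Subtype.val_injective⟩
  · rintro e ⟨e', he', rfl⟩
    exact (⊤ : SimpleGraph (Fin n)).not_isDiag_of_mem_edgeSet e'.2
  · rintro e ⟨e', he', rfl⟩ f ⟨f', hf', rfl⟩ g ⟨g', hg', rfl⟩ hef hfg heg h1 h2
    exact gp_trans hS he' hf' hg' (fun h => hef (by rw [h])) (fun h => hfg (by rw [h]))
      (fun h => heg (by rw [h])) h1 h2

end GPX
namespace GPX

variable {n : ℕ}

lemma gp_of {S : Set ((⊤ : SimpleGraph (Fin n)).edgeSet)}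
    (h : ∀ u ∈ S, ∀ v ∈ S, ∀ w ∈ S, w ≠ u → w ≠ v → u ≠ v →
      Meets u.1 w.1 → Meets w.1 v.1 → Meets u.1 v.1) :
    (⊤ : SimpleGraph (Fin n)).lineGraph.IsGPSet S := by
  intro u v w hu hv hw huv huw hvw p hp hlen hsup
  have hdle : (⊤ : SimpleGraph (Fin n)).lineGraph.dist u v ≤ 2 := by
    by_cases hm : Meets u.1 v.1
    · have : (⊤ : SimpleGraph (Fin n)).lineGraph.dist u v = 1 :=
        SimpleGraph.dist_eq_one_iff_adj.mpr (lg_adj.mpr ⟨huv, hm⟩)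
      omega
    · rw [dist2 huv hm]
  cases p with
  | nil => exact huv rfl
  | cons h1 q =>
    cases q with
    | nil =>
      simp only [SimpleGraph.Walk.support_cons, SimpleGraph.Walk.support_nil,
        List.mem_cons, List.mem_singleton, List.not_mem_nil, or_false] at hsup
      rcases hsup with h' | h'
      · exact huw h'.symm
      · exact hvw h'.symm
    | cons h2 q2 =>
      rename_i x y
      cases q2 with
      | nil =>
        have hlen2 : (⊤ : SimpleGraph (Fin n)).lineGraph.dist u v = 2 := by
          rw [← hlen]; simp
        have hnm : ¬ Meets u.1 v.1 := by
          intro hm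
          have : (⊤ : SimpleGraph (Fin n)).lineGraph.dist u v = 1 :=
            SimpleGraph.dist_eq_one_iff_adj.mpr (lg_adj.mpr ⟨huv, hm⟩)
          omega
        simp only [SimpleGraph.Walk.support_cons, SimpleGraph.Walk.support_nil,
          List.mem_cons, List.not_mem_nil, or_false] at hsup
        rcases hsup with h' | h' | h'
        · exact huw h'.symm
        · subst h'
          exact hnm (h u hu v hv w hw (Ne.symm huw) (Ne.symm hvw) huv
            ((lg_adj.mp h1).2) ((lg_adj.mp h2).2))
        · exact hvw h'.symm
      | cons h3 q3 =>
        rw [← hlen] at hdle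
        simp at hdle

end GPX
namespace GPX

variable {n : ℕ}

lemma lower (hn : 3 ≤ n) :
    ∃ S : Set ((⊤ : SimpleGraph (Fin n)).edgeSet),
      (⊤ : SimpleGraph (Fin n)).lineGraph.IsGPSet S ∧
      S.ncard = (if 3 ∣ n then n else n - 1) := by
  classical
  have hpos : 0 < n := by omega
  set t : ℕ := 3 * (n / 3) + (if n % 3 = 2 then 1 else 0) with htdef
  have htval : t = (if 3 ∣ n then n else n - 1) := by
    rw [htdef]; split_ifs <;> omega
  have hcases : ∀ k, k < t → (k < 3 * (n / 3) ∨ (n % 3 = 2 ∧ k = 3 * (n / 3))) := by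
    intro k hk
    rw [htdef] at hk
    split_ifs at hk <;> omega
  have hbounds : ∀ k < t, k < n ∧ (3 * (k / 3) + (k + 1) % 3) < n ∧
      k ≠ (3 * (k / 3) + (k + 1) % 3) ∧ k / 3 = (3 * (k / 3) + (k + 1) % 3) / 3 := by
    intro k hk
    have := hcases k hk
    refine ⟨by omega, by omega, by omega, by omega⟩
  set F : ℕ → Sym2 (Fin n) := fun k =>
    s(⟨k % n, Nat.mod_lt _ hpos⟩, ⟨(3 * (k / 3) + (k + 1) % 3) % n, Nat.mod_lt _ hpos⟩)
    with hFdef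
  have hFedge : ∀ k, k < t → F k ∈ (⊤ : SimpleGraph (Fin n)).edgeSet := by
    intro k hk
    obtain ⟨h1, h2, h3, -⟩ := hbounds k hk
    rw [hFdef, SimpleGraph.mem_edgeSet, SimpleGraph.top_adj]
    intro hcontra
    apply h3
    have := congrArg Fin.val hcontra
    simpa [Nat.mod_eq_of_lt h1, Nat.mod_eq_of_lt h2] using this
  have hmem : ∀ k, k < t → ∀ x : Fin n, x ∈ F k →
      (x.val = k ∨ x.val = 3 * (k / 3) + (k + 1) % 3) := by
    intro k hk x hx
    obtain ⟨h1, h2, -, -⟩ := hbounds k hk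
    rw [hFdef, Sym2.mem_iff] at hx
    rcases hx with rfl | rfl
    · left; exact Nat.mod_eq_of_lt h1
    · right; exact Nat.mod_eq_of_lt h2
  obtain ⟨G, hG⟩ : ∃ G : ℕ → ((⊤ : SimpleGraph (Fin n)).edgeSet),
      ∀ k, k < t → (G k).1 = F k := by
    have hd : s(⟨0, by omega⟩, (⟨1, by omega⟩ : Fin n)) ∈ (⊤ : SimpleGraph (Fin n)).edgeSet := by
      rw [SimpleGraph.mem_edgeSet, SimpleGraph.top_adj]
      intro hcontra
      have := congrArg Fin.val hcontra
      simp at this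
    refine ⟨fun k => if h : F k ∈ (⊤ : SimpleGraph (Fin n)).edgeSet then ⟨F k, h⟩
      else ⟨_, hd⟩, ?_⟩
    intro k hk
    simp only [dif_pos (hFedge k hk)]
  set Sf : Finset ((⊤ : SimpleGraph (Fin n)).edgeSet) := (Finset.range t).image G with hSfdef
  have hmemSf : ∀ u : (⊤ : SimpleGraph (Fin n)).edgeSet,
      u ∈ Sf → ∃ k, k < t ∧ u.1 = F k := by
    intro u hu
    rw [hSfdef, Finset.mem_image] at hu
    obtain ⟨k, hk, rfl⟩ := hu
    exact ⟨k, Finset.mem_range.mp hk, hG k (Finset.mem_range.mp hk)⟩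
  refine ⟨↑Sf, ?_, ?_⟩
  · apply gp_of
    intro u hu v hv w hw hwu hwv huv hm1 hm2
    obtain ⟨j, hj, hju⟩ := hmemSf u (Finset.mem_coe.mp hu)
    obtain ⟨k, hk, hkv⟩ := hmemSf v (Finset.mem_coe.mp hv)
    obtain ⟨l, hl, hlw⟩ := hmemSf w (Finset.mem_coe.mp hw)
    -- groups are equal
    have hjl : j / 3 = l / 3 := by
      obtain ⟨x, hx1, hx2⟩ := hm1
      have e1 := hmem j hj x (hju ▸ hx1)
      have e2 := hmem l hl x (hlw ▸ hx2)
      obtain ⟨-, -, -, g1⟩ := hbounds j hj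
      obtain ⟨-, -, -, g2⟩ := hbounds l hl
      omega
    have hlk : l / 3 = k / 3 := by
      obtain ⟨x, hx1, hx2⟩ := hm2
      have e1 := hmem l hl x (hlw ▸ hx1)
      have e2 := hmem k hk x (hkv ▸ hx2)
      obtain ⟨-, -, -, g1⟩ := hbounds l hl
      obtain ⟨-, -, -, g2⟩ := hbounds k hk
      omega
    by_contra hnm
    -- the four endpoint values are pairwise distinct
    obtain ⟨hj1, hj2, hj3, hj4⟩ := hbounds j hj
    obtain ⟨hk1, hk2, hk3, hk4⟩ := hbounds k hk
    have hp1 : (⟨j % n, Nat.mod_lt _ hpos⟩ : Fin n) ∈ F j := by rw [hFdef]; simp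
    have hp2 : (⟨(3 * (j / 3) + (j + 1) % 3) % n, Nat.mod_lt _ hpos⟩ : Fin n) ∈ F j := by
      rw [hFdef]; simp
    have hq1 : (⟨j % n, Nat.mod_lt _ hpos⟩ : Fin n) ∉ F k := by
      intro hq; exact hnm ⟨_, hju ▸ hp1, hkv ▸ hq⟩
    have hq2 : (⟨(3 * (j / 3) + (j + 1) % 3) % n, Nat.mod_lt _ hpos⟩ : Fin n) ∉ F k := by
      intro hq; exact hnm ⟨_, hju ▸ hp2, hkv ▸ hq⟩
    rw [hFdef, Sym2.mem_iff] at hq1 hq2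
    push_neg at hq1 hq2
    have d1 : j % n ≠ k % n := fun h => hq1.1 (Fin.ext h)
    have d2 : j % n ≠ (3 * (k / 3) + (k + 1) % 3) % n := fun h => hq1.2 (Fin.ext h)
    have d3 : (3 * (j / 3) + (j + 1) % 3) % n ≠ k % n := fun h => hq2.1 (Fin.ext h)
    have d4 : (3 * (j / 3) + (j + 1) % 3) % n ≠ (3 * (k / 3) + (k + 1) % 3) % n :=
      fun h => hq2.2 (Fin.ext h)
    rw [Nat.mod_eq_of_lt hj1, Nat.mod_eq_of_lt hk1] at d1
    rw [Nat.mod_eq_of_lt hj1, Nat.mod_eq_of_lt hk2] at d2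
    rw [Nat.mod_eq_of_lt hj2, Nat.mod_eq_of_lt hk1] at d3
    rw [Nat.mod_eq_of_lt hj2, Nat.mod_eq_of_lt hk2] at d4
    omega
  · rw [Set.ncard_coe_finset, hSfdef, ← htval]
    rw [Finset.card_image_of_injOn, Finset.card_range]
    intro j hj k hk hGjk
    rw [Finset.coe_range, Set.mem_Iio] at hj hk
    have hFjk : F j = F k := by rw [← hG j hj, ← hG k hk, hGjk]
    rw [hFdef, Sym2.eq_iff] at hFjk
    obtain ⟨hj1, hj2, hj3, hj4⟩ := hbounds j hj
    obtain ⟨hk1, hk2, hk3, hk4⟩ := hbounds k hk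
    rcases hFjk with ⟨e1, e2⟩ | ⟨e1, e2⟩
    · have := congrArg Fin.val e1
      simpa [Nat.mod_eq_of_lt hj1, Nat.mod_eq_of_lt hk1] using this
    · have v1 := congrArg Fin.val e1
      have v2 := congrArg Fin.val e2
      simp only [Nat.mod_eq_of_lt hj1, Nat.mod_eq_of_lt hk1,
        Nat.mod_eq_of_lt hj2, Nat.mod_eq_of_lt hk2] at v1 v2
      omega

end GPX


/-- For every `n ≥ 3`, the general position number of the line graph of the
complete graph `K_n` equals `n` if `3 ∣ n`, and `n - 1` otherwise. -/
theorem gpNumber_lineGraph_completeGraph (n : ℕ) (hn : 3 ≤ n) :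
    (⊤ : SimpleGraph (Fin n)).lineGraph.gpNumber = if 3 ∣ n then n else n - 1 := by
  rw [SimpleGraph.gpNumber]
  have hub : ∀ m ∈ {m | ∃ S : Set ((⊤ : SimpleGraph (Fin n)).edgeSet),
      (⊤ : SimpleGraph (Fin n)).lineGraph.IsGPSet S ∧ m = S.ncard},
      m ≤ (if 3 ∣ n then n else n - 1) := by
    rintro m ⟨S, hS, rfl⟩
    obtain ⟨hgood, hcard⟩ := GPX.gp_to_good hS
    obtain ⟨h1, h2⟩ := GPX.good_card_le hgood
    rw [← hcard]
    split_ifs with h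
    · exact h1
    · exact h2 h
  have hmem : (if 3 ∣ n then n else n - 1) ∈ {m | ∃ S : Set ((⊤ : SimpleGraph (Fin n)).edgeSet),
      (⊤ : SimpleGraph (Fin n)).lineGraph.IsGPSet S ∧ m = S.ncard} := by
    obtain ⟨S, hgp, hc⟩ := GPX.lower hn
    exact ⟨S, hgp, hc.symm⟩
  exact le_antisymm (csSup_le ⟨_, hmem⟩ hub) (le_csSup ⟨_, hub⟩ hmem)
end
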